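/- The fixed-sequence characterization: suppose a predictable family of intersection tests based on p-value thresholds satisfies that for every finite I, Σ_{i∈I} α_i^I = α, and singleton tests reject iff P_i ≤ α. Then for any J ⊆ ℕ with min(J) = i, predictability (φ_{{i}} = 1 implies φ_J = 1) forces α_i^J = α and α_j^J = 0 for all j ∈ J \ {i}; the resulting closed procedure rejects H_i if and only if P_1 ≤ α, P_2 ≤ α, ..., P_i ≤ α. -/

import Mathlib

theorem stmt18 (α : ℝ) (hα : 0 < α ∧ α < 1) (a : Set ℕ → ℕ → ℝ)
    (hrange : ∀ (I : Set ℕ) (i : ℕ), i ∈ I → 0 ≤ a I i ∧ a I i ≤ α)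
    (hsum : ∀ I : Finset ℕ, I.Nonempty → ∑ i ∈ I, a (↑I) i = α)
    (hsing : ∀ i : ℕ, a {i} i = α)
    (hpred : ∀ P : ℕ → ℝ, (∀ j, 0 < P j ∧ P j < 1) →
      ∀ (i : ℕ) (I : Set ℕ), (∀ j ∈ I, j ≤ i) → ∀ J : Set ℕ, (∀ j ∈ J, i < j) →
        (∃ k ∈ I, P k ≤ a I k) → ∃ k ∈ I ∪ J, P k ≤ a (I ∪ J) k) :
    (∀ (J : Finset ℕ) (i : ℕ), i ∈ J → (∀ j ∈ J, i ≤ j) →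
      a (↑J) i = α ∧ ∀ j ∈ J, j ≠ i → a (↑J) j = 0) ∧
    (∀ P : ℕ → ℝ, (∀ j, 0 < P j ∧ P j < 1) → ∀ i : ℕ,
      ((∀ K : Set ℕ, i ∈ K → ∃ k ∈ K, P k ≤ a K k) ↔ ∀ j ≤ i, P j ≤ α)) := by
  classical
  have part1 : ∀ (J : Finset ℕ) (i : ℕ), i ∈ J → (∀ j ∈ J, i ≤ j) →
      a (↑J) i = α ∧ ∀ j ∈ J, j ≠ i → a (↑J) j = 0 := by
    intro J i hiJ hmin
    set P : ℕ → ℝ := fun j => if j = i then α else if j ∈ J then (a (↑J) j + 1)/2 else 1/2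
      with hPdef
    have hPrange : ∀ j, 0 < P j ∧ P j < 1 := by
      intro j
      simp only [hPdef]
      split_ifs with h1 h2
      · exact ⟨hα.1, hα.2⟩
      · have hr := hrange (↑J) j (by exact_mod_cast h2)
        constructor <;> nlinarith [hα.2, hr.1, hr.2]
      · norm_num
    have hJ'lt : ∀ j ∈ ((↑J : Set ℕ) \ {i}), i < j := by
      intro j hj
      have hj1 : j ∈ J := by exact_mod_cast hj.1
      have hj2 : j ≠ i := hj.2
      exact lt_of_le_of_ne (hmin j hj1) (Ne.symm hj2)
    have hIi : ∀ j ∈ ({i} : Set ℕ), j ≤ i := by intro j hj; simp at hj; omega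
    have hex : ∃ k ∈ ({i} : Set ℕ), P k ≤ a ({i} : Set ℕ) k := by
      refine ⟨i, by simp, ?_⟩
      simp [hPdef, hsing i]
    have key := hpred P hPrange i ({i} : Set ℕ) hIi ((↑J : Set ℕ) \ {i}) hJ'lt hex
    have hU : ({i} : Set ℕ) ∪ ((↑J : Set ℕ) \ {i}) = (↑J : Set ℕ) := by
      ext x
      constructor
      · rintro (hx | hx)
        · simp at hx; subst hx; exact_mod_cast hiJ
        · exact hx.1
      · intro hx
        by_cases hxi : x = i
        · left; simp [hxi]
        · right; exact ⟨hx, hxi⟩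
    rw [hU] at key
    obtain ⟨k, hk, hle⟩ := key
    have hkJ : k ∈ J := by exact_mod_cast hk
    have hki : k = i := by
      by_contra hki
      have : P k = (a (↑J) k + 1)/2 := by simp [hPdef, hki, hkJ]
      have hr := hrange (↑J) k hk
      rw [this] at hle
      nlinarith [hα.2]
    subst hki
    have hPk : P k = α := by simp [hPdef]
    rw [hPk] at hle
    have haeq : a (↑J) k = α := le_antisymm (hrange (↑J) k hk).2 hle
    refine ⟨haeq, ?_⟩
    have hsumJ := hsum J ⟨k, hiJ⟩
    rw [← Finset.add_sum_erase J _ hiJ, haeq] at hsumJ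
    have hzero : ∑ j ∈ J.erase k, a (↑J) j = 0 := by linarith
    have hall := (Finset.sum_eq_zero_iff_of_nonneg (fun j hj =>
      (hrange (↑J) j (by exact_mod_cast Finset.mem_of_mem_erase hj)).1)).mp hzero
    intro j hj hji
    exact hall j (Finset.mem_erase.mpr ⟨hji, hj⟩)
  refine ⟨part1, ?_⟩
  intro P hP i
  constructor
  · intro h j hj
    obtain ⟨k, hk, hle⟩ := h (↑({j, i} : Finset ℕ)) (by simp)
    have hp1 := part1 {j, i} j (by simp)
      (by intro x hx; simp at hx; omega)
    simp only [Finset.coe_insert, Finset.coe_singleton, Set.mem_insert_iff,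
      Set.mem_singleton_iff] at hk
    rcases hk with rfl | rfl
    · rw [hp1.1] at hle; exact hle
    · by_cases hki : k = j
      · subst hki; rw [hp1.1] at hle; exact hle
      · have h0 := hp1.2 k (by simp) hki
        rw [h0] at hle
        exact absurd hle (not_le.mpr (hP k).1)
  · intro h K hiK
    set F : Finset ℕ := (Finset.range (i+1)).filter (· ∈ K) with hF
    have hiF : i ∈ F := by simp [hF, hiK, Nat.lt_succ_self]
    have hFne : F.Nonempty := ⟨i, hiF⟩
    set m := F.min' hFne with hm
    have hmF : m ∈ F := F.min'_mem hFne
    have hmle : ∀ j ∈ F, m ≤ j := fun j hj => F.min'_le j hj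
    have hmi : m ≤ i := hmle i hiF
    have hma : a (↑F) m = α := (part1 F m hmF hmle).1
    have hFle : ∀ j ∈ (↑F : Set ℕ), j ≤ i := by
      intro j hj
      have : j ∈ F := by exact_mod_cast hj
      simp [hF] at this; omega
    have hJ'lt : ∀ j ∈ ({j | j ∈ K ∧ i < j} : Set ℕ), i < j := fun j hj => hj.2
    have hex : ∃ k ∈ (↑F : Set ℕ), P k ≤ a (↑F : Set ℕ) k := by
      refine ⟨m, by exact_mod_cast hmF, ?_⟩
      rw [hma]; exact h m hmi
    have key := hpred P hP i (↑F : Set ℕ) hFle ({j | j ∈ K ∧ i < j} : Set ℕ) hJ'lt hex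
    have hU : (↑F : Set ℕ) ∪ ({j | j ∈ K ∧ i < j} : Set ℕ) = K := by
      ext x
      simp only [Set.mem_union, Finset.coe_filter, Set.mem_setOf_eq, Finset.mem_range, hF,
        Finset.mem_filter]
      constructor
      · rintro (⟨_, hx⟩ | ⟨hx, _⟩) <;> exact hx
      · intro hx
        by_cases hxi : x ≤ i
        · left; exact ⟨by omega, hx⟩
        · right; exact ⟨hx, by omega⟩
    rw [hU] at key
    exact key
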